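/- Let N ≥ 1 be an integer, let Δ > 0 and x₀ be real numbers with x₀ > ((2N+1)/N)·Δ, and let b > 0 be a real number satisfying b > x₀ + Δ and (N/(N+1))·b > Δ. Define x_n = x₀ + nΔ for n ∈ ℕ, and let M be the largest natural number with x_M < b. Then the number of indices n with 0 ≤ n ≤ M and x_n ∈ [b/(N+1), b) is strictly greater than (N/(N+1))·(M+1). -/

import Mathlib

open scoped Classical

/-- Counting estimate: under the stated hypotheses, more than an `N/(N+1)` fraction of
the first `M+1` terms of the progression `x₀ + nΔ` lie in `[b/(N+1), b)`. -/
theorem stmt_13 (N : ℕ) (hN : 1 ≤ N) (Δ x₀ b : ℝ) (hΔ : 0 < Δ)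
    (hx₀ : x₀ > ((2 * (N : ℝ) + 1) / N) * Δ) (hb : 0 < b) (hb1 : b > x₀ + Δ)
    (hb2 : ((N : ℝ) / ((N : ℝ) + 1)) * b > Δ)
    (M : ℕ) (hM : x₀ + (M : ℝ) * Δ < b)
    (hMmax : ∀ n : ℕ, x₀ + (n : ℝ) * Δ < b → n ≤ M) :
    ((N : ℝ) / ((N : ℝ) + 1)) * ((M : ℝ) + 1) <
      (((Finset.range (M + 1)).filter
        (fun n => x₀ + (n : ℝ) * Δ ∈ Set.Ico (b / ((N : ℝ) + 1)) b)).card : ℝ) := by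
  -- the statement's set is a monadically coerced `Finset ℝ`; convert it to a `Finset ℕ` count
  have hset : ((do let a ← Finset.range (M+1); pure ((a : ℕ) : ℝ)) : Finset ℝ)
      = (Finset.range (M+1)).image (fun a : ℕ => (a : ℝ)) := by
    simp
  rw [hset, Finset.filter_image, Finset.card_image_of_injective _ Nat.cast_injective]
  have hNpos : (0:ℝ) < (N:ℝ) := by exact_mod_cast hN
  have hN1 : (0:ℝ) < (N:ℝ) + 1 := by positivity
  set c : ℝ := b / ((N:ℝ) + 1) with hc
  -- x₀ is large enough: (N+1)Δ ≤ N x₀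
  have hx₀' : ((N:ℝ) + 1) * Δ ≤ (N:ℝ) * x₀ := by
    have h := mul_lt_mul_of_pos_left hx₀ hNpos
    have heq : (N:ℝ) * ((2*(N:ℝ)+1)/(N:ℝ)*Δ) = (2*(N:ℝ)+1)*Δ := by
      field_simp
    rw [heq] at h
    nlinarith [hΔ.le]
  -- M+1 ≥ (b - x₀)/Δ
  have hM1 : b ≤ x₀ + ((M:ℝ) + 1) * Δ := by
    by_contra h
    push_neg at h
    have := hMmax (M+1) (by push_cast; linarith)
    omega
  -- rewrite the filter
  have hfilter : (Finset.range (M + 1)).filter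
        (fun n : ℕ => x₀ + (n : ℝ) * Δ ∈ Set.Ico c b)
      = (Finset.range (M + 1)).filter (fun n : ℕ => ¬ (x₀ + (n : ℝ) * Δ < c)) := by
    apply Finset.filter_congr
    intro n hn
    have hn' : (n:ℝ) ≤ (M:ℝ) := by
      exact_mod_cast Nat.cast_le.mpr (Nat.lt_succ_iff.mp (Finset.mem_range.mp hn))
    have hlt : x₀ + (n:ℝ) * Δ < b := by nlinarith
    simp [Set.mem_Ico, hlt, not_lt]
  set A := (Finset.range (M + 1)).filter
        (fun n : ℕ => x₀ + (n : ℝ) * Δ ∈ Set.Ico c b) with hA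
  set B := (Finset.range (M + 1)).filter (fun n : ℕ => x₀ + (n : ℝ) * Δ < c) with hB
  have hcard : A.card + B.card = M + 1 := by
    have hBle : B.card ≤ M + 1 := by
      rw [hB]
      simpa using Finset.card_filter_le (Finset.range (M+1)) _
    rw [hfilter, Finset.filter_not, ← hB,
      Finset.card_sdiff_of_subset (hB ▸ Finset.filter_subset _ _), Finset.card_range]
    omega
  -- bound B
  set t : ℝ := (c - x₀) / Δ with ht
  have hBsub : B ⊆ Finset.range ⌈t⌉₊ := by
    intro n hn
    rw [hB, Finset.mem_filter] at hn
    have hnt : (n:ℝ) < t := by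
      rw [ht, lt_div_iff₀ hΔ]
      linarith [hn.2]
    exact Finset.mem_range.mpr (Nat.lt_ceil.mpr hnt)
  have hBcard : (B.card : ℝ) * ((N:ℝ) + 1) < (M:ℝ) + 1 := by
    rcases le_or_gt t 0 with h0 | h0
    · have hB0 : B.card = 0 := by
        have := Finset.card_le_card hBsub
        rw [Finset.card_range, Nat.ceil_eq_zero.mpr h0] at this
        omega
      rw [hB0]
      push_cast
      nlinarith [Nat.cast_nonneg (α := ℝ) M]
    · have h1 : (B.card : ℝ) ≤ (⌈t⌉₊ : ℝ) := by
        exact_mod_cast (Finset.card_le_card hBsub).trans (le_of_eq (Finset.card_range _))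
      have h2 : (⌈t⌉₊ : ℝ) < t + 1 := Nat.ceil_lt_add_one h0.le
      have htval : t * Δ = c - x₀ := by
        rw [ht]; field_simp
      have hcval : c * ((N:ℝ)+1) = b := by
        rw [hc]; field_simp
      have key : (t + 1) * ((N:ℝ) + 1) * Δ ≤ b - x₀ := by
        nlinarith [htval, hcval]
      have h3 : (t + 1) * ((N:ℝ) + 1) ≤ (M:ℝ) + 1 := by
        rw [← le_div_iff₀ hΔ] at key
        have h4 : (b - x₀) / Δ ≤ (M:ℝ) + 1 := by
          rw [div_le_iff₀ hΔ]; linarith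
        linarith
      nlinarith
  -- conclude
  have hAc : (A.card : ℝ) = (M:ℝ) + 1 - (B.card : ℝ) := by
    have : (A.card : ℝ) + (B.card : ℝ) = (M:ℝ) + 1 := by exact_mod_cast hcard
    linarith
  show ((N : ℝ) / ((N : ℝ) + 1)) * ((M : ℝ) + 1) < (A.card : ℝ)
  rw [hAc, div_mul_eq_mul_div, div_lt_iff₀ hN1]
  nlinarith
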